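/- arXiv:math/9911273 — 3 statements merged into one kernel-verified Lean document; each statement's English description precedes it below -/
import Mathlib

section
/- If t is an integer with t ≡ 2 (mod 3), then the equation q² = t·(1 − p² + p⁴) has no solutions with p, q in the 3-adic numbers ℚ₃. -/
lemma key_aux (t : ℤ) (ht : t % 3 = 2) (p q : ℚ_[3]) (hp : ‖p‖ ≤ 1)
    (hq : q ^ 2 = (t : ℚ_[3]) * (1 - p ^ 2 + p ^ 4)) : False := by
  set P : ℤ_[3] := ⟨p, hp⟩ with hP
  have hu : ‖(1 : ℚ_[3]) - p ^ 2 + p ^ 4‖ ≤ 1 := by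
    have : ((1 - P ^ 2 + P ^ 4 : ℤ_[3]) : ℚ_[3]) = 1 - p ^ 2 + p ^ 4 := by
      push_cast [hP]; rfl
    rw [← this]; exact (1 - P ^ 2 + P ^ 4 : ℤ_[3]).2
  have ht1 : ‖((t : ℤ_[3]) : ℚ_[3])‖ ≤ 1 := (t : ℤ_[3]).2
  have hqn : ‖q‖ ≤ 1 := by
    have h2 : ‖q‖ ^ 2 ≤ 1 := by
      rw [← norm_pow, hq]
      calc ‖(t : ℚ_[3]) * (1 - p ^ 2 + p ^ 4)‖ = ‖(t : ℚ_[3])‖ * ‖1 - p ^ 2 + p ^ 4‖ :=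
            norm_mul _ _
        _ ≤ 1 * 1 := by
            apply mul_le_mul _ hu (norm_nonneg _) zero_le_one
            simpa using ht1
        _ = 1 := by ring
    nlinarith [norm_nonneg q]
  set Q : ℤ_[3] := ⟨q, hqn⟩ with hQ
  have heq : Q ^ 2 = (t : ℤ_[3]) * (1 - P ^ 2 + P ^ 4) := by
    apply Subtype.ext
    push_cast [hQ, hP]
    exact hq
  have := congrArg (PadicInt.toZMod) heq
  simp only [map_pow, map_mul, map_add, map_sub, map_one, map_intCast] at this
  have htz : ((t : ℤ) : ZMod 3) = 2 := by
    obtain ⟨k, hk⟩ : ∃ k, t = 3 * k + 2 := ⟨t / 3, by omega⟩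
    subst hk; push_cast; simp [show ((3:ZMod 3)) = 0 by decide]
  rw [htz] at this
  revert this
  generalize PadicInt.toZMod Q = b
  generalize PadicInt.toZMod P = a
  revert a b
  decide

/-- If `t` is an integer with `t ≡ 2 (mod 3)`, then the equation
`q² = t·(1 − p² + p⁴)` has no solutions with `p, q` in the 3-adic numbers `ℚ₃`. -/
theorem no_padic_solutions_of_two_mod_three (t : ℤ) (ht : t % 3 = 2) :
    ¬ ∃ p q : ℚ_[3], q ^ 2 = (t : ℚ_[3]) * (1 - p ^ 2 + p ^ 4) := by
  rintro ⟨p, q, hq⟩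
  by_cases hp : ‖p‖ ≤ 1
  · exact key_aux t ht p q hp hq
  · push_neg at hp
    have hp0 : p ≠ 0 := by
      intro h; rw [h] at hp; norm_num at hp
    have hpi : ‖p⁻¹‖ ≤ 1 := by
      rw [norm_inv]
      exact inv_le_one_of_one_le₀ hp.le
    apply key_aux t ht p⁻¹ (q / p ^ 2) hpi
    field_simp
    rw [hq]; ring
end

section
/- Let N be a rational number with N ≠ ±1 and N not a rational cube, let α₀ be a real cube root of N, and let r = 4(α₀² + (α₀²−1)²). Then r is not a square in the field ℚ(α₀). -/
open Polynomial


lemma step_lemma (A B C E : ℤ) (hB : 1 ≤ B) (hC : 1 ≤ C) (hE : 1 ≤ E) (hAB : B < A)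
    (h1 : A ^ 2 = B ^ 2 + E ^ 2) (h2 : A ^ 2 = C ^ 2 + 9 * E ^ 2) :
    ∃ x y : ℚ, y ^ 2 = x * (x - 1) * (x - 9) ∧ y ≠ 0 ∧
      (x.num.natAbs : ℤ) + ((x.den : ℤ)) ≤ 2 * E ^ 2 - 1 := by
  have hA : 1 ≤ A := le_trans hB hAB.le
  have hAC : C < A := by nlinarith
  have hEQ : ((E : ℚ)) ≠ 0 := by positivity
  set nx : ℤ := (A - B) * (A - C) with hnx
  have hnxpos : 1 ≤ nx := by
    have h1' : 1 ≤ A - B := by omega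
    have h2' : 1 ≤ A - C := by omega
    nlinarith
  have key : nx * ((A + B) * (A + C)) = 9 * E ^ 4 := by
    rw [hnx]; linear_combination (A ^ 2 - C ^ 2) * h1 + E ^ 2 * h2
  have hA2 : 9 * E ^ 2 + 1 ≤ A ^ 2 := by nlinarith
  have hXb : nx ≤ E ^ 2 - 1 := by
    have e1 : A * A ≤ (A + B) * (A + C) := by nlinarith
    have e2 : nx * (A * A) ≤ nx * ((A + B) * (A + C)) :=
      mul_le_mul_of_nonneg_left e1 (by omega)
    nlinarith
  refine ⟨(nx : ℚ) / ((E : ℚ) ^ 2), ((nx * (B + C) : ℤ) : ℚ) / ((E : ℚ) ^ 3), ?_, ?_, ?_⟩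
  · have hq1 : ((A : ℚ)) ^ 2 = (B : ℚ) ^ 2 + (E : ℚ) ^ 2 := by exact_mod_cast h1
    have hq2 : ((A : ℚ)) ^ 2 = (C : ℚ) ^ 2 + 9 * (E : ℚ) ^ 2 := by exact_mod_cast h2
    have hx1 : (nx : ℚ) / ((E : ℚ) ^ 2) - 1 = -(((A : ℚ) - B) * ((B : ℚ) + C)) / (E : ℚ) ^ 2 := by
      rw [div_sub' (by positivity), div_eq_div_iff (by positivity) (by positivity)]
      push_cast [hnx]
      ring_nf
      nlinarith [hq1]
    have hx9 : (nx : ℚ) / ((E : ℚ) ^ 2) - 9 = -(((A : ℚ) - C) * ((B : ℚ) + C)) / (E : ℚ) ^ 2 := by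
      rw [div_sub' (by positivity), div_eq_div_iff (by positivity) (by positivity)]
      push_cast [hnx]
      ring_nf
      nlinarith [hq2]
    rw [hx1, hx9]
    push_cast [hnx]
    field_simp
  · have : (0 : ℤ) < nx * (B + C) := by positivity
    have h0 : ((nx * (B + C) : ℤ) : ℚ) ≠ 0 := by exact_mod_cast this.ne'
    exact div_ne_zero h0 (by positivity)
  · have hdveq : (nx : ℚ) / ((E : ℚ) ^ 2) = Rat.divInt (nx : ℤ) (E ^ 2 : ℤ) := by
      rw [Rat.divInt_eq_div]; push_cast; ring
    have hnum : ((nx : ℚ) / ((E : ℚ) ^ 2)).num ∣ nx := by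
      rw [hdveq]; exact Rat.num_dvd _ (by positivity)
    have hnumle : ((nx : ℚ) / ((E : ℚ) ^ 2)).num.natAbs ≤ nx.natAbs :=
      Nat.le_of_dvd (Int.natAbs_pos.mpr (by omega)) (Int.natAbs_dvd_natAbs.mpr hnum)
    have h1n : ((((nx : ℚ) / ((E : ℚ) ^ 2)).num.natAbs : ℤ)) ≤ nx := by
      calc ((((nx : ℚ) / ((E : ℚ) ^ 2)).num.natAbs : ℤ)) ≤ (nx.natAbs : ℤ) := by exact_mod_cast hnumle
        _ = nx := Int.natAbs_of_nonneg (by omega)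
    have hden : ((((nx : ℚ) / ((E : ℚ) ^ 2)).den : ℤ)) ∣ (E ^ 2 : ℤ) := by
      rw [hdveq]; exact Rat.den_dvd _ _
    have h2n : ((((nx : ℚ) / ((E : ℚ) ^ 2)).den : ℤ)) ≤ E ^ 2 := Int.le_of_dvd (by positivity) hden
    linarith

lemma odd_sq_diff (a e : ℤ) (ha : Odd a) (he : Odd e) : (8 : ℤ) ∣ a ^ 2 - e ^ 2 := by
  obtain ⟨s, rfl⟩ := ha
  obtain ⟨t, rfl⟩ := he
  obtain ⟨p, hp⟩ := Int.even_mul_succ_self s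
  obtain ⟨q, hq⟩ := Int.even_mul_succ_self t
  exact ⟨p - q, by linear_combination 4 * hp - 4 * hq⟩


lemma descent_opp (a e k : ℤ) (ha1 : 1 ≤ a) (he1 : 1 ≤ e) (hcae : IsCoprime a e)
    (hodd : Odd (a ^ 2 - e ^ 2)) (hk : k ^ 2 = (a ^ 2 - e ^ 2) * (a ^ 2 - 9 * e ^ 2))
    (hk0 : k ≠ 0) :
    ∃ x₀ y₀ : ℚ, y₀ ^ 2 = x₀ * (x₀ - 1) * (x₀ - 9) ∧ y₀ ≠ 0 ∧
      (x₀.num.natAbs : ℤ) + ((x₀.den : ℤ)) < a ^ 2 + e ^ 2 := by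
  have hk2pos : 0 < k ^ 2 := by positivity
  have hA₁ne : a ^ 2 - e ^ 2 ≠ 0 := by
    intro h; rw [h, zero_mul] at hk; exact hk0 (by simpa [pow_eq_zero_iff] using hk)
  have hB₁ne : a ^ 2 - 9 * e ^ 2 ≠ 0 := by
    intro h; rw [h, mul_zero] at hk; exact hk0 (by simpa [pow_eq_zero_iff] using hk)
  have hnot2 : ¬ (2 : ℤ) ∣ (a ^ 2 - e ^ 2) := by
    rcases hodd with ⟨t, ht⟩; omega
  have hc2A : IsCoprime (a ^ 2 - e ^ 2) (2 : ℤ) :=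
    ((Int.prime_two.coprime_iff_not_dvd).mpr hnot2).symm
  have hcAe : IsCoprime (a ^ 2 - e ^ 2) e := by
    have h1 : IsCoprime e (a ^ 2) := (hcae.symm).pow_right
    have h2 : a ^ 2 - e ^ 2 = a ^ 2 + e * (-e) := by ring
    rw [h2]; exact (h1.add_mul_left_right (-e)).symm
  have hcA8 : IsCoprime (a ^ 2 - e ^ 2) (8 * e ^ 2) := by
    have h8 : (8 : ℤ) * e ^ 2 = 2 * (2 * (2 * (e * e))) := by ring
    rw [h8]
    exact hc2A.mul_right (hc2A.mul_right (hc2A.mul_right (hcAe.mul_right hcAe)))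
  have hAB : IsCoprime (a ^ 2 - e ^ 2) (a ^ 2 - 9 * e ^ 2) := by
    have h' : a ^ 2 - 9 * e ^ 2 = -(8 * e ^ 2) + (a ^ 2 - e ^ 2) * 1 := by ring
    rw [h']; exact (hcA8.neg_right).add_mul_left_right 1
  obtain ⟨p0, hp0⟩ := Int.sq_of_isCoprime hAB hk.symm
  obtain ⟨q0, hq0⟩ := Int.sq_of_isCoprime hAB.symm
    (show (a ^ 2 - 9 * e ^ 2) * (a ^ 2 - e ^ 2) = k ^ 2 by linear_combination -hk)
  have hp00 : p0 ≠ 0 := by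
    intro h; rw [h] at hp0
    have h0 : a ^ 2 - e ^ 2 = 0 := by rcases hp0 with h' | h' <;> linear_combination h'
    exact hA₁ne h0
  have hq00 : q0 ≠ 0 := by
    intro h; rw [h] at hq0
    have h0 : a ^ 2 - 9 * e ^ 2 = 0 := by rcases hq0 with h' | h' <;> linear_combination h'
    exact hB₁ne h0
  set p : ℤ := |p0| with hp
  set q : ℤ := |q0| with hq
  have hp1 : 1 ≤ p := Int.one_le_abs hp00
  have hq1 : 1 ≤ q := Int.one_le_abs hq00
  have hpp : a ^ 2 - e ^ 2 = p ^ 2 ∨ a ^ 2 - e ^ 2 = -p ^ 2 := by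
    rw [hp, sq_abs]; exact hp0
  have hqq : a ^ 2 - 9 * e ^ 2 = q ^ 2 ∨ a ^ 2 - 9 * e ^ 2 = -q ^ 2 := by
    rw [hq, sq_abs]; exact hq0
  have hABpos : 0 < (a ^ 2 - e ^ 2) * (a ^ 2 - 9 * e ^ 2) := by rw [← hk]; exact hk2pos
  have hsq : ∀ z : ℤ, 1 ≤ z → 1 ≤ z ^ 2 := fun z hz => by nlinarith
  rcases mul_pos_iff.mp hABpos with ⟨hA₁pos, hB₁pos⟩ | ⟨hA₁neg, hB₁neg⟩
  · -- C1 : a² = p² + e², a² = q² + 9e²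
    have h1 : a ^ 2 = p ^ 2 + e ^ 2 := by
      rcases hpp with h | h
      · linarith
      · exfalso; have := sq_nonneg p; linarith
    have h2 : a ^ 2 = q ^ 2 + 9 * e ^ 2 := by
      rcases hqq with h | h
      · linarith
      · exfalso; have := sq_nonneg q; linarith
    have hpa : p < a := by
      refine lt_of_pow_lt_pow_left₀ 2 (by linarith) ?_
      have := hsq e he1; linarith
    obtain ⟨x₀, y₀, heq, hy0, hb⟩ := step_lemma a p q e hp1 hq1 he1 hpa h1 h2
    have := hsq p hp1
    exact ⟨x₀, y₀, heq, hy0, by linarith⟩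
  · -- C2 : e² = p² + a² ... step (3e) q (3p) a
    have h1' : e ^ 2 = p ^ 2 + a ^ 2 := by
      rcases hpp with h | h
      · exfalso; have := sq_nonneg p; linarith
      · linarith
    have h2' : 9 * e ^ 2 = q ^ 2 + a ^ 2 := by
      rcases hqq with h | h
      · exfalso; have := sq_nonneg q; linarith
      · linarith
    have hr1 : (3 * e) ^ 2 = 9 * e ^ 2 := by ring
    have hr2 : (3 * p) ^ 2 = 9 * p ^ 2 := by ring
    have h1 : (3 * e) ^ 2 = q ^ 2 + a ^ 2 := by linarith
    have h2 : (3 * e) ^ 2 = (3 * p) ^ 2 + 9 * a ^ 2 := by linarith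
    have hq3e : q < 3 * e := by
      refine lt_of_pow_lt_pow_left₀ 2 (by linarith) ?_
      have := hsq a ha1
      have h9 : (3 * e) ^ 2 = 9 * e ^ 2 := by ring
      linarith
    obtain ⟨x₀, y₀, heq, hy0, hb⟩ := step_lemma (3 * e) q (3 * p) a hq1 (by linarith) ha1 hq3e h1 h2
    have := hsq p hp1
    exact ⟨x₀, y₀, heq, hy0, by linarith⟩

lemma descent_oddodd (a e k : ℤ) (ha1 : 1 ≤ a) (he1 : 1 ≤ e) (hcae : IsCoprime a e)
    (haO : Odd a) (heO : Odd e) (hk : k ^ 2 = (a ^ 2 - e ^ 2) * (a ^ 2 - 9 * e ^ 2))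
    (hk0 : k ≠ 0) :
    ∃ x₀ y₀ : ℚ, y₀ ^ 2 = x₀ * (x₀ - 1) * (x₀ - 9) ∧ y₀ ≠ 0 ∧
      (x₀.num.natAbs : ℤ) + ((x₀.den : ℤ)) < a ^ 2 + e ^ 2 := by
  have hk2pos : 0 < k ^ 2 := by positivity
  have hA₁ne : a ^ 2 - e ^ 2 ≠ 0 := by
    intro h; rw [h, zero_mul] at hk; exact hk0 (by simpa [pow_eq_zero_iff] using hk)
  have hB₁ne : a ^ 2 - 9 * e ^ 2 ≠ 0 := by
    intro h; rw [h, mul_zero] at hk; exact hk0 (by simpa [pow_eq_zero_iff] using hk)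
  obtain ⟨α, hα⟩ : (8 : ℤ) ∣ a ^ 2 - e ^ 2 := odd_sq_diff a e haO heO
  obtain ⟨β, hβ⟩ : (8 : ℤ) ∣ a ^ 2 - 9 * e ^ 2 := by
    have h3e : Odd (3 * e) := by rcases heO with ⟨t, ht⟩; exact ⟨3 * t + 1, by omega⟩
    obtain ⟨c, hc⟩ := odd_sq_diff a (3 * e) haO h3e
    exact ⟨c, by linear_combination hc⟩
  have hαβe : α - β = e ^ 2 := by linarith [hα, hβ]
  have hcAe : IsCoprime (a ^ 2 - e ^ 2) e := by
    have h1 : IsCoprime e (a ^ 2) := (hcae.symm).pow_right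
    have h2 : a ^ 2 - e ^ 2 = a ^ 2 + e * (-e) := by ring
    rw [h2]; exact (h1.add_mul_left_right (-e)).symm
  have hcαe : IsCoprime α e := by
    rw [hα] at hcAe; exact IsCoprime.of_mul_left_right hcAe
  have hcαβ : IsCoprime α β := by
    have h' : β = -(e * e) + α * 1 := by linear_combination -hαβe
    rw [h']; exact ((hcαe.mul_right hcαe).neg_right).add_mul_left_right 1
  have h8k : (8 : ℤ) ∣ k := by
    refine (Int.pow_dvd_pow_iff (two_ne_zero)).mp ?_
    exact ⟨α * β, by rw [hk, hα, hβ]; ring⟩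
  obtain ⟨k₃, hk₃⟩ := h8k
  have hk₃2 : k₃ ^ 2 = α * β := by
    have h0 : (64 : ℤ) * k₃ ^ 2 = 64 * (α * β) := by
      have := hk; rw [hk₃, hα, hβ] at this; linear_combination this
    exact mul_left_cancel₀ (by norm_num) h0
  have hk₃0 : k₃ ≠ 0 := by intro h; rw [h, mul_zero] at hk₃; exact hk0 hk₃
  have hαβpos : 0 < α * β := by rw [← hk₃2]; positivity
  obtain ⟨p0, hp0⟩ := Int.sq_of_isCoprime hcαβ hk₃2.symm
  obtain ⟨q0, hq0⟩ := Int.sq_of_isCoprime hcαβ.symm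
    (show β * α = k₃ ^ 2 by linear_combination -hk₃2)
  have hαne : α ≠ 0 := by
    intro h'; rw [h'] at hα; exact hA₁ne (by linarith [hα])
  have hβne : β ≠ 0 := by
    intro h'; rw [h'] at hβ; exact hB₁ne (by linarith [hβ])
  have hp00 : p0 ≠ 0 := by
    intro h; rw [h] at hp0
    have h0 : α = 0 := by rcases hp0 with h' | h' <;> linear_combination h'
    exact hαne h0
  have hq00 : q0 ≠ 0 := by
    intro h; rw [h] at hq0
    have h0 : β = 0 := by rcases hq0 with h' | h' <;> linear_combination h'
    exact hβne h0
  set p : ℤ := |p0| with hp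
  set q : ℤ := |q0| with hq
  have hp1 : 1 ≤ p := Int.one_le_abs hp00
  have hq1 : 1 ≤ q := Int.one_le_abs hq00
  have hpp : α = p ^ 2 ∨ α = -p ^ 2 := by rw [hp, sq_abs]; exact hp0
  have hqq : β = q ^ 2 ∨ β = -q ^ 2 := by rw [hq, sq_abs]; exact hq0
  have hsq : ∀ z : ℤ, 1 ≤ z → 1 ≤ z ^ 2 := fun z hz => by nlinarith
  rcases mul_pos_iff.mp hαβpos with ⟨hαpos, hβpos⟩ | ⟨hαneg, hβneg⟩
  · -- C3 : a² = e² + 8p², a² = 9e² + 8q² ; step (3p) a (3e) q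
    have hp2 : a ^ 2 = e ^ 2 + 8 * p ^ 2 := by
      rcases hpp with h | h
      · linear_combination hα + 8 * h
      · exfalso; have := sq_nonneg p; linarith [hα]
    have hq2 : a ^ 2 = 9 * e ^ 2 + 8 * q ^ 2 := by
      rcases hqq with h | h
      · linear_combination hβ + 8 * h
      · exfalso; have := sq_nonneg q; linarith [hβ]
    have hr1 : (3 * p) ^ 2 = 9 * p ^ 2 := by ring
    have hr2 : (3 * e) ^ 2 = 9 * e ^ 2 := by ring
    have h1 : (3 * p) ^ 2 = a ^ 2 + q ^ 2 := by linarith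
    have h2 : (3 * p) ^ 2 = (3 * e) ^ 2 + 9 * q ^ 2 := by linarith
    have ha3p : a < 3 * p := by
      refine lt_of_pow_lt_pow_left₀ 2 (by linarith) ?_
      have := hsq q hq1
      linarith
    obtain ⟨x₀, y₀, heq, hy0, hb⟩ := step_lemma (3 * p) a (3 * e) q ha1 (by linarith) hq1 ha3p h1 h2
    have hq2' := hsq q hq1
    have he2' := hsq e he1
    exact ⟨x₀, y₀, heq, hy0, by linarith⟩
  · -- C4 : e² = a² + 8p², 9e² = a² + 8q² ; step q e a p
    have hp2 : e ^ 2 = a ^ 2 + 8 * p ^ 2 := by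
      rcases hpp with h | h
      · exfalso; have := sq_nonneg p; linarith [hα]
      · linear_combination -hα - 8 * h
    have hq2 : 9 * e ^ 2 = a ^ 2 + 8 * q ^ 2 := by
      rcases hqq with h | h
      · exfalso; have := sq_nonneg q; linarith [hβ]
      · linear_combination -hβ - 8 * h
    have h1 : q ^ 2 = e ^ 2 + p ^ 2 := by linarith
    have h2 : q ^ 2 = a ^ 2 + 9 * p ^ 2 := by linarith
    have heq' : e < q := by
      refine lt_of_pow_lt_pow_left₀ 2 (by linarith) ?_
      have := hsq p hp1
      linarith
    obtain ⟨x₀, y₀, heq, hy0, hb⟩ := step_lemma q e a p he1 ha1 hp1 heq' h1 h2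
    have hp2' := hsq p hp1
    have ha2' := hsq a ha1
    exact ⟨x₀, y₀, heq, hy0, by linarith⟩

theorem no_point : ∀ x y : ℚ, y ^ 2 = x * (x - 1) * (x - 9) → y = 0 := by
  suffices H : ∀ μ : ℕ, ∀ x y : ℚ, x.num.natAbs + x.den ≤ μ →
      y ^ 2 = x * (x - 1) * (x - 9) → y = 0 by
    intro x y h; exact H _ x y le_rfl h
  intro μ
  induction μ using Nat.strong_induction_on with
  | _ μ IH =>
  intro x y hμ hxy
  by_contra hy
  -- Step 0: integral form
  set m : ℤ := x.num with hm
  set d : ℤ := (x.den : ℤ) with hd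
  have hd1 : 0 < d := by rw [hd]; exact_mod_cast x.pos
  have hdq0 : ((d : ℚ)) ≠ 0 := by positivity
  have hxeq : (x : ℚ) = (m : ℚ) / (d : ℚ) := by
    rw [hm, hd]; exact_mod_cast (Rat.num_div_den x).symm
  have hmd : (m : ℚ) = x * (d : ℚ) := by rw [hxeq]; field_simp
  have hY2 : (y * (d : ℚ) ^ 2) * (y * (d : ℚ) ^ 2) = ((m * (m - d) * (m - 9 * d) * d : ℤ) : ℚ) := by
    push_cast
    calc (y * (d : ℚ) ^ 2) * (y * (d : ℚ) ^ 2) = y ^ 2 * (d : ℚ) ^ 4 := by ring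
      _ = (x * (x - 1) * (x - 9)) * (d : ℚ) ^ 4 := by rw [hxy]
      _ = (x * (d : ℚ)) * ((x * (d : ℚ)) - (d : ℚ)) * ((x * (d : ℚ)) - 9 * (d : ℚ)) * (d : ℚ) := by ring
      _ = (m : ℚ) * ((m : ℚ) - (d : ℚ)) * ((m : ℚ) - 9 * (d : ℚ)) * (d : ℚ) := by rw [← hmd]
  have hYden : (y * (d : ℚ) ^ 2).den = 1 := by
    have h2 : ((y * (d : ℚ) ^ 2) * (y * (d : ℚ) ^ 2)).den = 1 := by
      rw [hY2]; exact Rat.den_intCast _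
    rw [Rat.mul_self_den] at h2
    exact Nat.eq_one_of_mul_eq_one_right h2
  obtain ⟨NY, hNY⟩ : ∃ z : ℤ, ((z : ℚ)) = y * (d : ℚ) ^ 2 := by
    refine ⟨(y * (d : ℚ) ^ 2).num, ?_⟩
    conv_rhs => rw [← Rat.num_div_den (y * (d : ℚ) ^ 2)]
    rw [hYden]; simp
  have hNYint : NY ^ 2 = m * (m - d) * (m - 9 * d) * d := by
    have : ((NY ^ 2 : ℤ) : ℚ) = ((m * (m - d) * (m - 9 * d) * d : ℤ) : ℚ) := by
      push_cast
      rw [show ((NY : ℚ)) ^ 2 = (NY : ℚ) * (NY : ℚ) by ring, hNY]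
      rw [hY2]; push_cast; ring
    exact_mod_cast this
  have hNY0 : NY ≠ 0 := by
    intro h0; rw [h0] at hNY
    simp only [Int.cast_zero] at hNY
    exact (mul_ne_zero hy (pow_ne_zero 2 hdq0)) hNY.symm
  have hcop : IsCoprime m d := by
    rw [Int.isCoprime_iff_gcd_eq_one]
    have := x.reduced
    simpa [Int.gcd, hm, hd] using this
  have hcd1 : IsCoprime d m := hcop.symm
  have hcd2 : IsCoprime d (m - d) := by
    have h' : m - d = m + d * (-1) := by ring
    rw [h']; exact hcd1.add_mul_left_right (-1)
  have hcd3 : IsCoprime d (m - 9 * d) := by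
    have h' : m - 9 * d = m + d * (-9) := by ring
    rw [h']; exact hcd1.add_mul_left_right (-9)
  obtain ⟨e0, he0⟩ := Int.sq_of_isCoprime (hcd1.mul_right (hcd2.mul_right hcd3))
    (show d * (m * ((m - d) * (m - 9 * d))) = NY ^ 2 by linear_combination -hNYint)
  have hde : d = e0 ^ 2 := by
    rcases he0 with h | h
    · exact h
    · nlinarith [sq_nonneg e0]
  have he00 : e0 ≠ 0 := by intro h; rw [h] at hde; simp at hde; omega
  set e : ℤ := |e0| with he
  have hee : d = e ^ 2 := by rw [he, sq_abs]; exact hde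
  have he1 : 1 ≤ e := by rw [he]; exact Int.one_le_abs he00
  have hedvd : e ∣ NY := by
    refine (Int.pow_dvd_pow_iff (two_ne_zero)).mp ?_
    rw [← hee, hNYint]
    exact dvd_mul_left _ _
  obtain ⟨n, hn⟩ := hedvd
  have hne : n ^ 2 = m * (m - e ^ 2) * (m - 9 * e ^ 2) := by
    have h0 : e ^ 2 * n ^ 2 = e ^ 2 * (m * (m - e ^ 2) * (m - 9 * e ^ 2)) := by
      have := hNYint
      rw [hn, hee] at this
      linear_combination this
    exact mul_left_cancel₀ (pow_ne_zero 2 (by omega)) h0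
  have hn0 : n ≠ 0 := by
    intro h0; rw [h0, mul_zero] at hn; exact hNY0 hn
  have hmpos : 0 < m := by
    rcases lt_trichotomy m 0 with hneg | h0 | hpos
    · have t1 : m - e ^ 2 < 0 := by nlinarith
      have t2 : m - 9 * e ^ 2 < 0 := by nlinarith
      have t3 : 0 < m * (m - e ^ 2) := mul_pos_of_neg_of_neg hneg t1
      have t4 : m * (m - e ^ 2) * (m - 9 * e ^ 2) < 0 := mul_neg_of_pos_of_neg t3 t2
      nlinarith [sq_nonneg n]
    · exfalso; apply hn0; rw [h0] at hne; simpa [pow_eq_zero_iff] using hne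
    · exact hpos
  have hmnat : (x.num.natAbs : ℤ) = m := by rw [hm]; exact Int.natAbs_of_nonneg hmpos.le
  have hdnat : ((x.den : ℤ)) = e ^ 2 := by rw [← hd, hee]
  -- the IH applier
  have hIH : ∀ x₀ y₀ : ℚ, y₀ ^ 2 = x₀ * (x₀ - 1) * (x₀ - 9) →
      (x₀.num.natAbs : ℤ) + (x₀.den : ℤ) < m + e ^ 2 → y₀ = 0 := by
    intro x₀ y₀ heq hlt
    have hnat : x₀.num.natAbs + x₀.den < x.num.natAbs + x.den := by
      have : (x.num.natAbs : ℤ) + (x.den : ℤ) = m + e ^ 2 := by rw [hmnat, hdnat]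
      omega
    exact IH (x₀.num.natAbs + x₀.den) (lt_of_lt_of_le hnat hμ) x₀ y₀ le_rfl heq
  by_cases h3m : (3 : ℤ) ∣ m
  · by_cases h9m : (9 : ℤ) ∣ m
    · -- inversion descent x ↦ 9/x
      obtain ⟨m₂, hm2⟩ := h9m
      have hm2pos : 0 < m₂ := by omega
      have hx0ne : (x : ℚ) ≠ 0 := by
        rw [hxeq]; exact div_ne_zero (by exact_mod_cast hmpos.ne') hdq0
      set x₀ : ℚ := ((e ^ 2 : ℤ) : ℚ) / ((m₂ : ℤ) : ℚ) with hx₀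
      set y₀ : ℚ := 9 * y / x ^ 2 with hy₀
      have hm2q0 : ((m₂ : ℚ)) ≠ 0 := by exact_mod_cast hm2pos.ne'
      have hx₀inv : x₀ = 9 / x := by
        rw [hx₀, hxeq, hee, hm2]
        push_cast
        field_simp
      have heq0 : y₀ ^ 2 = x₀ * (x₀ - 1) * (x₀ - 9) := by
        rw [hx₀inv, hy₀]
        field_simp
        linear_combination hxy
      have hy00 : y₀ ≠ 0 := by
        rw [hy₀]
        exact div_ne_zero (by exact mul_ne_zero (by norm_num) hy) (pow_ne_zero 2 hx0ne)
      refine absurd (hIH x₀ y₀ heq0 ?_) hy00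
      have hdveq : x₀ = Rat.divInt (e ^ 2 : ℤ) (m₂ : ℤ) := by
        rw [hx₀, Rat.divInt_eq_div]
      have hnum : x₀.num ∣ e ^ 2 := by rw [hdveq]; exact Rat.num_dvd _ (by omega)
      have hden : ((x₀.den : ℤ)) ∣ m₂ := by rw [hdveq]; exact Rat.den_dvd _ _
      have b1 : (x₀.num.natAbs : ℤ) ≤ e ^ 2 := by
        have := Nat.le_of_dvd (Int.natAbs_pos.mpr (by positivity)) (Int.natAbs_dvd_natAbs.mpr hnum)
        calc ((x₀.num.natAbs : ℤ)) ≤ ((e ^ 2).natAbs : ℤ) := by exact_mod_cast this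
          _ = e ^ 2 := Int.natAbs_of_nonneg (by positivity)
      have b2 : ((x₀.den : ℤ)) ≤ m₂ := Int.le_of_dvd hm2pos hden
      omega
    · -- 3 ∣ m, 9 ∤ m : impossible mod 3
      obtain ⟨m₁, hm1⟩ := h3m
      have h3m1 : ¬ (3 : ℤ) ∣ m₁ := by
        intro ⟨t, ht⟩; exact h9m ⟨t, by omega⟩
      have h3e : ¬ (3 : ℤ) ∣ e := by
        intro h3e'
        have h3d : (3 : ℤ) ∣ d := by rw [hee]; exact Dvd.dvd.pow h3e' two_ne_zero
        have : IsUnit (3 : ℤ) := hcop.isUnit_of_dvd' ⟨m₁, hm1⟩ h3d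
        rw [Int.isUnit_iff] at this; omega
      have h9n : (3 : ℤ) ∣ n := by
        have h9 : (9 : ℤ) ∣ n ^ 2 := ⟨m₁ * (3 * m₁ - e ^ 2) * (m₁ - 3 * e ^ 2), by
          rw [hne, hm1]; ring⟩
        exact Int.prime_three.dvd_of_dvd_pow (dvd_trans ⟨3, by norm_num⟩ h9)
      obtain ⟨n₁, hn1⟩ := h9n
      have hA : n₁ ^ 2 = m₁ * (3 * m₁ - e ^ 2) * (m₁ - 3 * e ^ 2) := by
        have h0 : (9 : ℤ) * n₁ ^ 2 = 9 * (m₁ * (3 * m₁ - e ^ 2) * (m₁ - 3 * e ^ 2)) := by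
          have := hne; rw [hn1, hm1] at this; linear_combination this
        exact mul_left_cancel₀ (by norm_num) h0
      have hm1pos : 0 < m₁ := by omega
      have hcm1e : IsCoprime m₁ (e ^ 2) := by
        have : IsCoprime (3 * m₁) (e ^ 2) := by rw [← hm1, ← hee]; exact hcop
        exact IsCoprime.of_mul_left_right this
      have hc31 : IsCoprime m₁ (3 * m₁ - e ^ 2) := by
        have h' : 3 * m₁ - e ^ 2 = -(e ^ 2) + m₁ * 3 := by ring
        rw [h']; exact (hcm1e.neg_right).add_mul_left_right 3
      have hc32 : IsCoprime m₁ (m₁ - 3 * e ^ 2) := by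
        have h3 : IsCoprime m₁ (3 : ℤ) := ((Int.prime_three.coprime_iff_not_dvd).mpr h3m1).symm
        have : IsCoprime m₁ (3 * e ^ 2) := h3.mul_right hcm1e
        have h' : m₁ - 3 * e ^ 2 = -(3 * e ^ 2) + m₁ * 1 := by ring
        rw [h']; exact (this.neg_right).add_mul_left_right 1
      obtain ⟨a0, ha0⟩ := Int.sq_of_isCoprime (hc31.mul_right hc32)
        (show m₁ * ((3 * m₁ - e ^ 2) * (m₁ - 3 * e ^ 2)) = n₁ ^ 2 by linear_combination -hA)
      have hma : m₁ = a0 ^ 2 := by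
        rcases ha0 with h | h
        · exact h
        · exfalso; have h2 : (0 : ℤ) ≤ a0 ^ 2 := sq_nonneg a0; linarith
      have ha00 : a0 ≠ 0 := by
        intro h'; rw [h'] at hma; simp at hma; omega
      have h3a : ¬ (3 : ℤ) ∣ a0 := by
        intro hdvd; exact h3m1 (by rw [hma, sq]; exact Dvd.dvd.mul_right hdvd a0)
      have hadvd : a0 ∣ n₁ := by
        refine (Int.pow_dvd_pow_iff (two_ne_zero)).mp ?_
        exact ⟨(3 * m₁ - e ^ 2) * (m₁ - 3 * e ^ 2), by rw [hA, hma]; ring⟩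
      obtain ⟨k, hk⟩ := hadvd
      have hkk : k ^ 2 = (3 * a0 ^ 2 - e ^ 2) * (a0 ^ 2 - 3 * e ^ 2) := by
        have h0 : a0 ^ 2 * k ^ 2 = a0 ^ 2 * ((3 * a0 ^ 2 - e ^ 2) * (a0 ^ 2 - 3 * e ^ 2)) := by
          have := hA; rw [hk, hma] at this; linear_combination this
        exact mul_left_cancel₀ (pow_ne_zero 2 ha00) h0
      -- contradiction in ZMod 3
      have hz : ((k : ZMod 3)) ^ 2 = -((e : ZMod 3)) ^ 2 * ((a0 : ZMod 3)) ^ 2 := by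
        have := congrArg (fun z : ℤ => (z : ZMod 3)) hkk
        push_cast at this
        rw [show ((3 : ZMod 3)) = 0 by decide] at this
        rw [this]; ring
      have hz_e : ((e : ZMod 3)) ≠ 0 := by
        rw [Ne, ZMod.intCast_zmod_eq_zero_iff_dvd]
        exact_mod_cast h3e
      have hz_a : ((a0 : ZMod 3)) ≠ 0 := by
        rw [Ne, ZMod.intCast_zmod_eq_zero_iff_dvd]
        exact_mod_cast h3a
      have : ∀ k' e' a' : ZMod 3, e' ≠ 0 → a' ≠ 0 → k' ^ 2 ≠ -e' ^ 2 * a' ^ 2 := by decide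
      exact this _ _ _ hz_e hz_a hz
  · -- 3 ∤ m : the four descent cases
    have hcme : IsCoprime m (e ^ 2) := by rw [← hee]; exact hcop
    have hc3 : IsCoprime m (3 : ℤ) := ((Int.prime_three.coprime_iff_not_dvd).mpr h3m).symm
    have hcm1 : IsCoprime m (m - e ^ 2) := by
      have h' : m - e ^ 2 = -(e ^ 2) + m * 1 := by ring
      rw [h']; exact (hcme.neg_right).add_mul_left_right 1
    have hcm2 : IsCoprime m (m - 9 * e ^ 2) := by
      have h9 : IsCoprime m (3 * (3 * e ^ 2)) := hc3.mul_right (hc3.mul_right hcme)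
      have h' : m - 9 * e ^ 2 = -(3 * (3 * e ^ 2)) + m * 1 := by ring
      rw [h']; exact (h9.neg_right).add_mul_left_right 1
    obtain ⟨a0, ha0⟩ := Int.sq_of_isCoprime (hcm1.mul_right hcm2)
      (show m * ((m - e ^ 2) * (m - 9 * e ^ 2)) = n ^ 2 by linear_combination -hne)
    have hma : m = a0 ^ 2 := by
      rcases ha0 with h | h
      · exact h
      · exfalso; have h2 : (0 : ℤ) ≤ a0 ^ 2 := sq_nonneg a0; linarith
    have ha00 : a0 ≠ 0 := by intro h'; rw [h'] at hma; simp at hma; omega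
    set a : ℤ := |a0| with ha
    have hma' : m = a ^ 2 := by rw [ha, sq_abs]; exact hma
    have ha1 : 1 ≤ a := Int.one_le_abs ha00
    have hcae : IsCoprime a e := by
      have h1 : IsCoprime (a ^ 2) (e ^ 2) := by rw [← hma']; exact hcme
      have h2 : IsCoprime a (e ^ 2) := (IsCoprime.pow_left_iff (by norm_num)).mp h1
      exact (IsCoprime.pow_right_iff (by norm_num)).mp h2
    have hadvd : a ∣ n := by
      refine (Int.pow_dvd_pow_iff (two_ne_zero)).mp ?_
      exact ⟨(m - e ^ 2) * (m - 9 * e ^ 2), by rw [hne, ← hma']; ring⟩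
    obtain ⟨k, hkdef⟩ := hadvd
    have hk : k ^ 2 = (a ^ 2 - e ^ 2) * (a ^ 2 - 9 * e ^ 2) := by
      have h0 : a ^ 2 * k ^ 2 = a ^ 2 * ((a ^ 2 - e ^ 2) * (a ^ 2 - 9 * e ^ 2)) := by
        have := hne; rw [hkdef, hma'] at this; linear_combination this
      exact mul_left_cancel₀ (pow_ne_zero 2 (by omega)) h0
    have hk0 : k ≠ 0 := by intro h'; rw [h', mul_zero] at hkdef; exact hn0 hkdef
    have hdescent : ∃ x₀ y₀ : ℚ, y₀ ^ 2 = x₀ * (x₀ - 1) * (x₀ - 9) ∧ y₀ ≠ 0 ∧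
        (x₀.num.natAbs : ℤ) + ((x₀.den : ℤ)) < a ^ 2 + e ^ 2 := by
      rcases Int.even_or_odd a with haE | haO <;> rcases Int.even_or_odd e with heE | heO
      · -- both even: impossible
        exfalso
        obtain ⟨s, hs⟩ := haE
        obtain ⟨t, ht⟩ := heE
        have : IsUnit (2 : ℤ) := hcae.isUnit_of_dvd' ⟨s, by omega⟩ ⟨t, by omega⟩
        rw [Int.isUnit_iff] at this; omega
      · -- a even, e odd
        refine descent_opp a e k ha1 he1 hcae ?_ hk hk0
        obtain ⟨s, hs⟩ := haE
        obtain ⟨t, ht⟩ := heO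
        exact ⟨2 * s ^ 2 - 2 * t ^ 2 - 2 * t - 1, by rw [hs, ht]; ring⟩
      · -- a odd, e even
        refine descent_opp a e k ha1 he1 hcae ?_ hk hk0
        obtain ⟨s, hs⟩ := haO
        obtain ⟨t, ht⟩ := heE
        exact ⟨2 * s ^ 2 + 2 * s - 2 * t ^ 2, by rw [hs, ht]; ring⟩
      · exact descent_oddodd a e k ha1 he1 hcae haO heO hk hk0
    obtain ⟨x₀, y₀, heq0, hy00, hlt⟩ := hdescent
    exact hy00 (hIH x₀ y₀ heq0 (by rw [hma']; exact hlt))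




lemma caseA (u v w : ℚ) (hv : v ≠ 0) (h3 : v ^ 2 + 2 * u * w = -4)
    (hA : 3 * u * w - 2 * u - 2 * w + 4 = 0) : False := by
  have h32 : 3 * w - 2 ≠ 0 := by
    intro h
    have hw : w = 2 / 3 := by linarith
    rw [hw] at hA
    ring_nf at hA
    norm_num at hA
  have hcurve : (3 * v * (3 * w - 2) / 2) ^ 2 =
      (3 - 3 * w) * ((3 - 3 * w) - 1) * ((3 - 3 * w) - 9) := by
    have h3' : v ^ 2 + 2 * u * w + 4 = 0 := by linarith
    linear_combination (9 * w - 27 / 2 * w ^ 2) * hA + (9 / 4) * (3 * w - 2) ^ 2 * h3'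
  have hy : 3 * v * (3 * w - 2) / 2 ≠ 0 := by
    apply div_ne_zero _ two_ne_zero
    exact mul_ne_zero (mul_ne_zero three_ne_zero hv) h32
  exact hy (no_point _ _ hcurve)

/-- Let `N` be a rational number with `N ≠ ±1` and `N` not a rational cube, let `α₀` be
a real cube root of `N`, and let `r = 4(α₀² + (α₀²−1)²)`. Then `r` is not a square in the
field `ℚ(α₀)` (whose elements are of the form `u + v·α₀ + w·α₀²` with `u, v, w ∈ ℚ`). -/
theorem r_not_square_in_cubic_field (N : ℚ) (h1 : N ≠ 1) (h2 : N ≠ -1)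
    (hcube : ¬ ∃ c : ℚ, c ^ 3 = N) (α₀ : ℝ) (hα : α₀ ^ 3 = (N : ℝ)) :
    ¬ ∃ u v w : ℚ, ((u : ℝ) + v * α₀ + w * α₀ ^ 2) ^ 2
      = 4 * (α₀ ^ 2 + (α₀ ^ 2 - 1) ^ 2) := by
  rintro ⟨u, v, w, hEq⟩
  -- irreducibility of X³ − N and the minimal polynomial of α₀
  have hirr : Irreducible (X ^ 3 - C N) :=
    X_pow_sub_C_irreducible_of_prime Nat.prime_three (fun b hb => hcube ⟨b, hb⟩)
  have haev : Polynomial.aeval α₀ ((X : ℚ[X]) ^ 3 - C N) = 0 := by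
    simp [hα]
  have hint : IsIntegral ℚ α₀ :=
    ⟨X ^ 3 - C N, monic_X_pow_sub_C N three_ne_zero, by simpa [Polynomial.aeval_def] using haev⟩
  have hmin : minpoly ℚ α₀ = X ^ 3 - C N :=
    (minpoly.eq_of_irreducible_of_monic hirr haev (monic_X_pow_sub_C N three_ne_zero)).symm
  have hdeg3 : (minpoly ℚ α₀).degree = 3 := by
    rw [hmin]; exact degree_X_pow_sub_C (by norm_num) N
  -- linear independence of 1, α₀, α₀²
  have lin : ∀ q₀ q₁ q₂ : ℚ, (q₀ : ℝ) + (q₁ : ℝ) * α₀ + (q₂ : ℝ) * α₀ ^ 2 = 0 →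
      q₀ = 0 ∧ q₁ = 0 ∧ q₂ = 0 := by
    intro q₀ q₁ q₂ hzero
    set p : ℚ[X] := C q₀ + C q₁ * X + C q₂ * X ^ 2 with hp
    have haevp : Polynomial.aeval α₀ p = 0 := by
      rw [hp]; simp only [map_add, map_mul, map_pow, Polynomial.aeval_C, Polynomial.aeval_X, eq_ratCast]
      push_cast at hzero ⊢
      linear_combination hzero
    by_cases hp0 : p = 0
    · refine ⟨?_, ?_, ?_⟩
      · have := congrArg (fun r => Polynomial.coeff r 0) hp0
        simpa [hp] using this
      · have := congrArg (fun r => Polynomial.coeff r 1) hp0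
        simpa [hp] using this
      · have := congrArg (fun r => Polynomial.coeff r 2) hp0
        simpa [hp] using this
    · exfalso
      have hle := minpoly.degree_le_of_ne_zero ℚ α₀ hp0 haevp
      rw [hdeg3] at hle
      have hle2 : p.degree ≤ 2 := by
        rw [show p = C q₂ * X ^ 2 + C q₁ * X + C q₀ by rw [hp]; ring]
        exact degree_quadratic_le
      have : (3 : WithBot ℕ) ≤ 2 := le_trans hle hle2
      norm_num at this
  -- extract the three rational equations
  have hexp : ((u ^ 2 + 2 * N * v * w - 4 : ℚ) : ℝ)
      + ((2 * u * v + N * w ^ 2 - 4 * N : ℚ) : ℝ) * α₀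
      + ((v ^ 2 + 2 * u * w + 4 : ℚ) : ℝ) * α₀ ^ 2 = 0 := by
    push_cast
    linear_combination hEq - (2 * (v : ℝ) * (w : ℝ) + ((w : ℝ) ^ 2 - 4) * α₀) * hα
  obtain ⟨e1, e2, e3⟩ := lin _ _ _ hexp
  have E1 : u ^ 2 + 2 * N * v * w = 4 := by linarith
  have E2 : 2 * u * v + N * w ^ 2 = 4 * N := by linarith
  have E3 : v ^ 2 + 2 * u * w = -4 := by linarith
  -- v ≠ 0
  have hv : v ≠ 0 := by
    intro hv0
    rw [hv0] at E1 E2 E3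
    have huw : u * w = -2 := by linarith
    have hu2 : u ^ 2 = 4 := by linarith
    have hw2 : w ^ 2 = 1 := by nlinarith [huw, hu2]
    have hN0 : N = 0 := by nlinarith [E2, hw2]
    exact hcube ⟨0, by rw [hN0]; norm_num⟩
  -- the factorization identity
  have key : (3 * u * w - 2 * u - 2 * w + 4) * (3 * u * w + 2 * u + 2 * w + 4) = 0 := by
    linear_combination (w ^ 2 - 4) * E1 - 2 * v * w * E2 + 4 * u * w * E3
  rcases mul_eq_zero.mp key with hA | hB
  · exact caseA u v w hv E3 hA
  · refine caseA (-u) v (-w) hv (by linear_combination E3) (by linear_combination hB)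
end

section
/- Let N be a rational number, N ≠ ±1, N a rational cube, and set α₀ = N^{1/3} ∈ ℚ. Then r = 4(α₀² + (α₀²−1)²) is not a square in ℚ. -/
/-- The descent system `S`. -/
def DescentS (x y p q : ℤ) : Prop :=
  0 < x ∧ 0 < y ∧ 0 < p ∧ 0 < q ∧ Odd x ∧ IsCoprime x y ∧ IsCoprime p q ∧
    x * y = 2 * (p * q) ∧ (x ^ 2 - y ^ 2 = p ^ 2 - q ^ 2 ∨ x ^ 2 - y ^ 2 = q ^ 2 - p ^ 2)

lemma odd_abs_int {x : ℤ} (h : Odd x) : Odd |x| := by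
  rcases abs_choice x with h' | h' <;> rw [h']
  · exact h
  · exact h.neg

lemma isCoprime_abs {x y : ℤ} (h : IsCoprime x y) : IsCoprime |x| |y| := by
  rcases abs_choice x with h1 | h1 <;> rcases abs_choice y with h2 | h2 <;> rw [h1, h2]
  · exact h
  · exact h.neg_right
  · exact h.neg_left
  · exact h.neg_left.neg_right

lemma S_of (x y p q : ℤ) (hx : Odd x) (hxy : IsCoprime x y) (hpq : IsCoprime p q)
    (hprod : x * y = 2 * (p * q)) (hne : x * y ≠ 0)
    (hdiff : x ^ 2 - y ^ 2 = p ^ 2 - q ^ 2 ∨ x ^ 2 - y ^ 2 = q ^ 2 - p ^ 2) :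
    ∃ x' y' p' q', DescentS x' y' p' q' ∧ x' * y' = |x * y| := by
  have hx0 : x ≠ 0 := fun h => hne (by simp [h])
  have hy0 : y ≠ 0 := fun h => hne (by simp [h])
  have hpq0 : p * q ≠ 0 := by
    intro h; rw [h] at hprod; simp at hprod; rcases hprod with h'|h' <;> simp [h'] at hne
  have hp0 : p ≠ 0 := fun h => hpq0 (by simp [h])
  have hq0 : q ≠ 0 := fun h => hpq0 (by simp [h])
  refine ⟨|x|, |y|, |p|, |q|, ⟨abs_pos.mpr hx0, abs_pos.mpr hy0, abs_pos.mpr hp0,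
    abs_pos.mpr hq0, odd_abs_int hx, isCoprime_abs hxy, isCoprime_abs hpq, ?_, ?_⟩, ?_⟩
  · rw [← abs_mul, ← abs_mul, hprod, abs_mul, abs_of_nonneg (by norm_num : (0:ℤ) ≤ 2)]
  · rcases hdiff with h | h
    · left; rw [sq_abs, sq_abs, sq_abs, sq_abs]; exact h
    · right; rw [sq_abs, sq_abs, sq_abs, sq_abs]; exact h
  · rw [← abs_mul]

lemma split_lemma (x y p q : ℤ) (hx : 0 < x) (hy : 0 < y) (hp : 0 < p) (hq : 0 < q)
    (h : x * y = p * q) :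
    ∃ a b c d : ℤ, 0 < a ∧ 0 < b ∧ 0 < c ∧ 0 < d ∧
      x = a * b ∧ y = c * d ∧ p = a * c ∧ q = b * d := by
  set g : ℕ := Int.gcd x p with hg
  have hgpos : 0 < g := Int.gcd_pos_of_ne_zero_left p hx.ne'
  set a : ℤ := (g : ℤ) with hadef
  have ha : 0 < a := by rw [hadef]; exact_mod_cast hgpos
  have hax : a ∣ x := Int.gcd_dvd_left x p
  have hap : a ∣ p := Int.gcd_dvd_right x p
  obtain ⟨b, hb⟩ := hax
  obtain ⟨c, hc⟩ := hap
  have hb0 : 0 < b := by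
    rcases mul_pos_iff.mp (hb ▸ hx) with ⟨_, h2⟩ | ⟨h1, _⟩
    · exact h2
    · exact absurd ha (by exact not_lt.mpr h1.le)
  have hc0 : 0 < c := by
    rcases mul_pos_iff.mp (hc ▸ hp) with ⟨_, h2⟩ | ⟨h1, _⟩
    · exact h2
    · exact absurd ha (by exact not_lt.mpr h1.le)
  have hbc : IsCoprime b c := by
    rw [Int.isCoprime_iff_gcd_eq_one]
    have hbdiv : b = x / a := by rw [hb, Int.mul_ediv_cancel_left _ ha.ne']
    have hcdiv : c = p / a := by rw [hc, Int.mul_ediv_cancel_left _ ha.ne']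
    rw [hbdiv, hcdiv, hadef, hg]
    exact Int.gcd_div_gcd_div_gcd hgpos
  have hkey : b * y = c * q := by
    have : a * (b * y) = a * (c * q) := by
      rw [← mul_assoc, ← mul_assoc, ← hb, ← hc, h]
    exact mul_left_cancel₀ ha.ne' this
  have hbq : b ∣ q := hbc.dvd_of_dvd_mul_right ⟨y, by linarith [hkey]⟩
  obtain ⟨d, hd⟩ := hbq
  have hd0 : 0 < d := by
    rcases mul_pos_iff.mp (hd ▸ hq) with ⟨_, h2⟩ | ⟨h1, _⟩
    · exact h2
    · exact absurd hb0 (by exact not_lt.mpr h1.le)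
  have hy' : y = c * d := by
    have : b * y = b * (c * d) := by rw [hkey, hd]; ring
    exact mul_left_cancel₀ hb0.ne' this
  exact ⟨a, b, c, d, ha, hb0, hc0, hd0, hb, hy', hc, hd⟩

lemma no_three_dvd (a d : ℤ) (h : IsCoprime a d) (h3 : (3:ℤ) ∣ a ^ 2 + d ^ 2) : False := by
  have key : ∀ u v : ZMod 3, u ^ 2 + v ^ 2 = 0 → u = 0 ∧ v = 0 := by decide
  have hcast : ((a ^ 2 + d ^ 2 : ℤ) : ZMod 3) = 0 := by
    rw [ZMod.intCast_zmod_eq_zero_iff_dvd]; exact_mod_cast h3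
  push_cast at hcast
  obtain ⟨h1, h2⟩ := key _ _ hcast
  have ha : (3:ℤ) ∣ a := by have := (ZMod.intCast_zmod_eq_zero_iff_dvd a 3).mp h1; exact_mod_cast this
  have hd : (3:ℤ) ∣ d := by have := (ZMod.intCast_zmod_eq_zero_iff_dvd d 3).mp h2; exact_mod_cast this
  have := h.isUnit_of_dvd' ha hd
  rw [Int.isUnit_iff] at this
  omega

lemma solve_k (a d b c : ℤ) (ha0 : a ≠ 0) (hc0 : c ≠ 0)
    (had : IsCoprime a d) (hcb : IsCoprime c b)
    (heq : b ^ 2 * (a ^ 2 + d ^ 2) = c ^ 2 * (a ^ 2 + 4 * d ^ 2)) :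
    a ^ 2 + d ^ 2 = c ^ 2 ∧ a ^ 2 + 4 * d ^ 2 = b ^ 2 := by
  have hdvd : c ^ 2 ∣ b ^ 2 * (a ^ 2 + d ^ 2) := ⟨a ^ 2 + 4 * d ^ 2, heq⟩
  have hcb2 : IsCoprime (c ^ 2) (b ^ 2) := hcb.pow
  have hdvd2 : c ^ 2 ∣ a ^ 2 + d ^ 2 := hcb2.dvd_of_dvd_mul_left hdvd
  obtain ⟨k, hk⟩ := hdvd2
  have hbk : b ^ 2 * k = a ^ 2 + 4 * d ^ 2 := by
    have h2 : c ^ 2 * (b ^ 2 * k) = c ^ 2 * (a ^ 2 + 4 * d ^ 2) := by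
      rw [← heq, hk]; ring
    exact mul_left_cancel₀ (pow_ne_zero 2 hc0) h2
  have hk0 : 0 < k := by
    have h1 : 0 < c ^ 2 * k := by
      rw [← hk]; positivity
    rcases mul_pos_iff.mp h1 with ⟨_, h2⟩ | ⟨h1', _⟩
    · exact h2
    · exact absurd (pow_pos (abs_pos.mpr hc0) 2) (by rw [← sq_abs] at h1'; exact not_lt.mpr h1'.le)
  have hkd : IsCoprime k d := by
    have h1 : IsCoprime (a ^ 2 + d * d) d := (IsCoprime.pow_left had : IsCoprime (a ^ 2) d).add_mul_left_left d
    have h2 : IsCoprime (a ^ 2 + d ^ 2) d := by rwa [show d * d = d ^ 2 by ring] at h1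
    exact h2.of_isCoprime_of_dvd_left (Dvd.intro_left _ hk.symm)
  have hk3 : k ∣ 3 := by
    have hdvd3 : k ∣ 3 * d ^ 2 := ⟨b ^ 2 - c ^ 2, by linarith [hk, hbk]⟩
    exact (IsCoprime.pow_right hkd : IsCoprime k (d ^ 2)).dvd_of_dvd_mul_right hdvd3
  have hkle : k ≤ 3 := Int.le_of_dvd (by norm_num) hk3
  interval_cases k
  · constructor <;> linarith [hk, hbk]
  · norm_num at hk3
  · exact absurd (⟨c ^ 2, by linarith [hk]⟩ : (3:ℤ) ∣ a ^ 2 + d ^ 2) (fun h => no_three_dvd a d had h)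
lemma classify_pos (x y z : ℤ) (h : PythagoreanTriple x y z) (hgcd : Int.gcd x y = 1)
    (hx : Odd x) (hy : 0 < y) :
    ∃ m n : ℤ, 0 < m ∧ 0 < n ∧ x = m ^ 2 - n ^ 2 ∧ y = 2 * (m * n) ∧ IsCoprime m n ∧
      ((Even m ∧ Odd n) ∨ (Odd m ∧ Even n)) := by
  obtain ⟨m, n, hmn, _, hco, hpar⟩ := (PythagoreanTriple.coprime_classification).mp ⟨h, hgcd⟩
  have hpar' : (Even m ∧ Odd n) ∨ (Odd m ∧ Even n) := by
    rcases hpar with ⟨h1, h2⟩ | ⟨h1, h2⟩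
    · exact Or.inl ⟨Int.even_iff.mpr h1, Int.odd_iff.mpr h2⟩
    · exact Or.inr ⟨Int.odd_iff.mpr h1, Int.even_iff.mpr h2⟩
  have hco' : IsCoprime m n := Int.isCoprime_iff_gcd_eq_one.mpr hco
  rcases hmn with ⟨hx1, hy1⟩ | ⟨hx1, _⟩
  · have hmn0 : 0 < m * n := by linarith
    rcases mul_pos_iff.mp hmn0 with ⟨h1, h2⟩ | ⟨h1, h2⟩
    · exact ⟨m, n, h1, h2, hx1, by linarith, hco', hpar'⟩
    · refine ⟨-m, -n, by linarith, by linarith, by rw [hx1]; ring, by rw [hy1]; ring,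
        hco'.neg_left.neg_right, ?_⟩
      rcases hpar' with ⟨h1', h2'⟩ | ⟨h1', h2'⟩
      · exact Or.inl ⟨h1'.neg, h2'.neg⟩
      · exact Or.inr ⟨h1'.neg, h2'.neg⟩
  · exfalso
    have : Even x := ⟨m * n, by rw [hx1]; ring⟩
    exact (Int.not_odd_iff_even.mpr this) hx

lemma odd_isCoprime_two {α : ℤ} (h : Odd α) : IsCoprime α 2 := by
  obtain ⟨t, ht⟩ := h
  exact ⟨1, -t, by rw [ht]; ring⟩

lemma F_to_S (α δ β γ : ℤ) (hα : 0 < α) (hδ : 0 < δ) (hodd : Odd α) (hco : IsCoprime α δ)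
    (h1 : α ^ 2 + δ ^ 2 = γ ^ 2) (h2 : α ^ 2 + 4 * δ ^ 2 = β ^ 2) :
    ∃ x y p q, DescentS x y p q ∧ x * y = δ := by
  have t1 : PythagoreanTriple α δ γ := by
    have : α * α + δ * δ = γ * γ := by linear_combination h1
    exact this
  have gcd1 : Int.gcd α δ = 1 := Int.isCoprime_iff_gcd_eq_one.mp hco
  obtain ⟨m, n, hm, hn, hαm, hδm, hcomn, _⟩ := classify_pos α δ γ t1 gcd1 hodd hδ
  have t2 : PythagoreanTriple α (2 * δ) β := by
    have : α * α + (2 * δ) * (2 * δ) = β * β := by linear_combination h2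
    exact this
  have gcd2 : Int.gcd α (2 * δ) = 1 := by
    rw [← Int.isCoprime_iff_gcd_eq_one]
    exact ((odd_isCoprime_two hodd).mul_right hco)
  obtain ⟨r, s, hr, hs, hαr, hδr, hcors, hpar⟩ :=
    classify_pos α (2 * δ) β t2 gcd2 hodd (by linarith)
  have hrs : r * s = δ := by linarith
  rcases hpar with ⟨hre, hso⟩ | ⟨hro, hse⟩
  · refine ⟨s, r, m, n, ⟨hs, hr, hm, hn, hso, hcors.symm, hcomn, ?_, ?_⟩, by linarith [hrs]⟩
    · rw [mul_comm]; rw [hrs]; linarith [hδm]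
    · right; linarith [hαr, hαm]
  · refine ⟨r, s, m, n, ⟨hr, hs, hm, hn, hro, hcors, hcomn, ?_, ?_⟩, hrs⟩
    · rw [hrs]; linarith [hδm]
    · left; linarith [hαr, hαm]

lemma S_to_F (x y p q : ℤ) (h : DescentS x y p q) :
    ∃ α δ β γ : ℤ, 0 < α ∧ 0 < δ ∧ Odd α ∧ IsCoprime α δ ∧
      α ^ 2 + δ ^ 2 = γ ^ 2 ∧ α ^ 2 + 4 * δ ^ 2 = β ^ 2 ∧ 2 * δ ≤ x * y := by
  obtain ⟨hx, hy, hp, hq, hodd, hxy, hpq, hprod, hdiff⟩ := h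
  -- y is even
  have h2y : (2:ℤ) ∣ y := by
    have h2xy : (2:ℤ) ∣ x * y := ⟨p * q, hprod⟩
    rcases ((Int.prime_two.dvd_mul).mp h2xy) with h' | h'
    · exfalso
      have : Even x := by
        obtain ⟨t, ht⟩ := h'
        exact ⟨t, by rw [ht]; ring⟩
      exact (Int.not_odd_iff_even.mpr this) hodd
    · exact h'
  obtain ⟨y', hy2⟩ := h2y
  have hy'0 : 0 < y' := by nlinarith
  have hprod' : x * y' = p * q := by
    have : 2 * (x * y') = 2 * (p * q) := by rw [← hprod, hy2]; ring
    exact mul_left_cancel₀ two_ne_zero this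
  have hxy' : IsCoprime x y' := hxy.of_isCoprime_of_dvd_right ⟨2, by rw [hy2]; ring⟩
  obtain ⟨a, b, c, d, ha, hb, hc, hd, hab, hcd, hac, hbd⟩ :=
    split_lemma x y' p q hx hy'0 hp hq hprod'
  have hoddab : Odd a ∧ Odd b := Int.odd_mul.mp (hab ▸ hodd)
  have hcop_ad : IsCoprime a d := by
    have h1 : IsCoprime a y' := hxy'.of_isCoprime_of_dvd_left ⟨b, hab⟩
    exact h1.of_isCoprime_of_dvd_right ⟨c, by rw [hcd]; ring⟩
  have hcop_bc : IsCoprime b c := by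
    have h1 : IsCoprime b y' := hxy'.of_isCoprime_of_dvd_left ⟨a, by rw [hab]; ring⟩
    exact h1.of_isCoprime_of_dvd_right ⟨d, hcd⟩
  have h1a : 1 ≤ a := ha
  have h1b : 1 ≤ b := hb
  have h1c : 1 ≤ c := hc
  have h1d : 1 ≤ d := hd
  rcases hdiff with hdiff1 | hdiff1
  · -- b²(a²+d²) = c²(a²+4d²)
    have heq : b ^ 2 * (a ^ 2 + d ^ 2) = c ^ 2 * (a ^ 2 + 4 * d ^ 2) := by
      have hxe : x = a * b := hab
      have hye : y = 2 * (c * d) := by rw [hy2, hcd]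
      have hpe : p = a * c := hac
      have hqe : q = b * d := hbd
      rw [hxe, hye, hpe, hqe] at hdiff1
      linear_combination hdiff1
    obtain ⟨hF1, hF2⟩ := solve_k a d b c (by linarith) (by linarith) hcop_ad hcop_bc.symm heq
    refine ⟨a, d, b, c, by linarith, by linarith, hoddab.1, hcop_ad, hF1, hF2, ?_⟩
    -- 2*d ≤ x*y = 2*(p*q) = 2*(a*c*(b*d))
    have : d ≤ p * q := by
      rw [hac, hbd]
      nlinarith
    linarith [hprod]
  · -- a²(b²+c²) = d²(b²+4c²)
    have heq : a ^ 2 * (b ^ 2 + c ^ 2) = d ^ 2 * (b ^ 2 + 4 * c ^ 2) := by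
      have hye : y = 2 * (c * d) := by rw [hy2, hcd]
      rw [hab, hye, hac, hbd] at hdiff1
      linear_combination hdiff1
    obtain ⟨hF1, hF2⟩ := solve_k b c a d (by linarith) (by linarith) hcop_bc hcop_ad.symm heq
    refine ⟨b, c, a, d, by linarith, by linarith, hoddab.2, hcop_bc, hF1, hF2, ?_⟩
    have : c ≤ p * q := by
      rw [hac, hbd]
      nlinarith
    linarith [hprod]
lemma S_descent (x y p q : ℤ) (h : DescentS x y p q) :
    ∃ x' y' p' q', DescentS x' y' p' q' ∧ 1 ≤ x' * y' ∧ 2 * (x' * y') ≤ x * y := by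
  obtain ⟨α, δ, β, γ, hα, hδ, hodd, hco, h1, h2, hle⟩ := S_to_F x y p q h
  obtain ⟨x', y', p', q', hS, hval⟩ := F_to_S α δ β γ hα hδ hodd hco h1 h2
  exact ⟨x', y', p', q', hS, by rw [hval]; linarith, by rw [hval]; linarith⟩

lemma no_S_aux : ∀ N : ℕ, ∀ x y p q : ℤ, x * y ≤ (N : ℤ) → ¬ DescentS x y p q := by
  intro N
  induction N with
  | zero =>
    intro x y p q hle hS
    obtain ⟨hx, hy, _, _, _, _, _, _, _⟩ := hS
    have := mul_pos hx hy
    push_cast at hle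
    linarith
  | succ n ih =>
    intro x y p q hle hS
    obtain ⟨x', y', p', q', hS', h1, h2⟩ := S_descent x y p q hS
    have : x' * y' ≤ (n : ℤ) := by
      push_cast at hle ⊢
      omega
    exact ih x' y' p' q' this hS'

lemma no_S (x y p q : ℤ) : ¬ DescentS x y p q := by
  intro hS
  have hx : 0 < x := hS.1
  have hy : 0 < y := hS.2.1
  have h1 : x * y ≤ ((x * y).toNat : ℤ) := by
    rw [Int.toNat_of_nonneg (by positivity)]
  exact no_S_aux (x * y).toNat x y p q h1 hS

theorem quartic_no_sq (a b c : ℤ) (hco : IsCoprime a b) (ha : a ≠ 0) (hb : b ≠ 0)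
    (hne : a ^ 2 ≠ b ^ 2) (h : c ^ 2 = a ^ 4 - a ^ 2 * b ^ 2 + b ^ 4) : False := by
  have htriple : PythagoreanTriple (a ^ 2 - b ^ 2) (a * b) c := by
    have : (a ^ 2 - b ^ 2) * (a ^ 2 - b ^ 2) + (a * b) * (a * b) = c * c := by
      linear_combination -h
    exact this
  have hA : IsCoprime (a ^ 2 - b ^ 2) a := by
    have h1 : IsCoprime (-b ^ 2) a := (IsCoprime.pow_left hco.symm : IsCoprime (b ^ 2) a).neg_left
    have h2 := h1.add_mul_left_left a
    rwa [show -b ^ 2 + a * a = a ^ 2 - b ^ 2 by ring] at h2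
  have hB : IsCoprime (a ^ 2 - b ^ 2) b := by
    have h1 : IsCoprime (a ^ 2) b := IsCoprime.pow_left hco
    have h2 := h1.add_mul_left_left (-b)
    rwa [show a ^ 2 + b * (-b) = a ^ 2 - b ^ 2 by ring] at h2
  have hgcd : Int.gcd (a ^ 2 - b ^ 2) (a * b) = 1 :=
    Int.isCoprime_iff_gcd_eq_one.mp (hA.mul_right hB)
  obtain ⟨p, q, hmn, _, hcopq, hparpq⟩ :=
    (PythagoreanTriple.coprime_classification).mp ⟨htriple, hgcd⟩
  have hcopq' : IsCoprime p q := Int.isCoprime_iff_gcd_eq_one.mpr hcopq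
  rcases Int.even_or_odd a with hea | hoa
  · rcases Int.even_or_odd b with heb | hob
    · -- both even: contradiction with coprimality
      obtain ⟨t, ht⟩ := hea
      obtain ⟨s, hs⟩ := heb
      have := hco.isUnit_of_dvd' (⟨t, by omega⟩ : (2:ℤ) ∣ a) (⟨s, by omega⟩ : (2:ℤ) ∣ b)
      rw [Int.isUnit_iff] at this
      omega
    · -- a even, b odd : mixed case
      have hodddiff : Odd (a ^ 2 - b ^ 2) := by
        have h1 : Even (a ^ 2) := (Int.even_pow).mpr ⟨hea, by norm_num⟩
        have h2 : Odd (b ^ 2) := hob.pow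
        exact (Even.sub_odd h1 h2)
      rcases hmn with ⟨hd1, hd2⟩ | ⟨hd1, _⟩
      · -- a²-b² = p²-q², a*b = 2pq
        obtain ⟨x', y', p', q', hS, _⟩ := S_of b a q p hob hco.symm hcopq'.symm
          (by linear_combination hd2) (by simp [mul_ne_zero hb ha])
          (by left; linear_combination -hd1)
        exact no_S x' y' p' q' hS
      · exfalso
        have : Even (a ^ 2 - b ^ 2) := ⟨p * q, by rw [hd1]; ring⟩
        exact (Int.not_odd_iff_even.mpr this) hodddiff
  · rcases Int.even_or_odd b with heb | hob
    · -- a odd, b even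
      have hodddiff : Odd (a ^ 2 - b ^ 2) := by
        have h1 : Even (b ^ 2) := (Int.even_pow).mpr ⟨heb, by norm_num⟩
        exact (Odd.sub_even (hoa.pow) h1)
      rcases hmn with ⟨hd1, hd2⟩ | ⟨hd1, _⟩
      · obtain ⟨x', y', p', q', hS, _⟩ := S_of a b p q hoa hco hcopq'
          (by linarith [hd2]) (by simp [mul_ne_zero ha hb])
          (by left; linarith [hd1])
        exact no_S x' y' p' q' hS
      · exfalso
        have : Even (a ^ 2 - b ^ 2) := ⟨p * q, by rw [hd1]; ring⟩
        exact (Int.not_odd_iff_even.mpr this) hodddiff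
    · -- both odd
      have hoddab : Odd (a * b) := Int.odd_mul.mpr ⟨hoa, hob⟩
      rcases hmn with ⟨_, hd2⟩ | ⟨hd1, hd2⟩
      · exfalso
        have : Even (a * b) := ⟨p * q, by rw [hd2]; ring⟩
        exact (Int.not_odd_iff_even.mpr this) hoddab
      · -- a*b = p²-q², a²-b² = 2pq
        obtain ⟨X, hX⟩ := (Odd.add_odd hoa hob)
        obtain ⟨Y, hY⟩ := (Odd.sub_odd hoa hob)
        have hXb : a + b = 2 * X := by omega
        have hYb : a - b = 2 * Y := by omega
        have hab' : a * b = X ^ 2 - Y ^ 2 := by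
          have h4 : 4 * (a * b) = 4 * (X ^ 2 - Y ^ 2) := by
            linear_combination (a + b + 2 * X) * hXb - (a - b + 2 * Y) * hYb
          linarith
        have hpqXY : p * q = 2 * (X * Y) := by
          have h4 : 2 * (p * q) = 2 * (2 * (X * Y)) := by
            linear_combination (a - b) * hXb + 2 * X * hYb - hd1
          linarith
        have hXYa : X + Y = a := by omega
        have hXYb : X - Y = b := by omega
        have hcoXY : IsCoprime X Y := by
          obtain ⟨u, v, huv⟩ := hco
          exact ⟨u + v, u - v, by linear_combination huv + u * hXYa + v * hXYb⟩
        have hXYne : X * Y ≠ 0 := by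
          have hX0 : X ≠ 0 := by
            intro h0
            apply hne
            have : a = -b := by omega
            rw [this]; ring
          have hY0 : Y ≠ 0 := by
            intro h0
            apply hne
            have : a = b := by omega
            rw [this]
          exact mul_ne_zero hX0 hY0
        have hpqne : p * q ≠ 0 := by rw [hpqXY]; exact mul_ne_zero two_ne_zero hXYne
        -- p, q have opposite parity; pick the odd one first
        rcases hparpq with ⟨hp1, hq1⟩ | ⟨hp1, hq1⟩
        · -- p even, q odd
          obtain ⟨x', y', p', q', hS, _⟩ := S_of q p X Y (Int.odd_iff.mpr hq1) hcopq'.symm hcoXY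
            (by linear_combination hpqXY) (by rw [mul_comm]; exact hpqne)
            (by right; linear_combination hd2 - hab')
          exact no_S x' y' p' q' hS
        · obtain ⟨x', y', p', q', hS, _⟩ := S_of p q X Y (Int.odd_iff.mpr hp1) hcopq' hcoXY
            hpqXY hpqne (by left; linear_combination hab' - hd2)
          exact no_S x' y' p' q' hS
/-- Let `N` be a rational number, `N ≠ 0, ±1`, `N` a rational cube with cube root
`α₀ ∈ ℚ`. Then `r = 4(α₀² + (α₀²−1)²)` is not a square in `ℚ`. -/
theorem r_not_square_rational (N : ℚ) (h0 : N ≠ 0) (h1 : N ≠ 1) (h2 : N ≠ -1)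
    (α₀ : ℚ) (hα : α₀ ^ 3 = N) :
    ¬ ∃ q : ℚ, q ^ 2 = 4 * (α₀ ^ 2 + (α₀ ^ 2 - 1) ^ 2) := by
  rintro ⟨q, hq⟩
  have hα0 : α₀ ≠ 0 := by
    intro h; apply h0; rw [← hα, h]; norm_num
  have hα1 : α₀ ≠ 1 := by
    intro h; apply h1; rw [← hα, h]; norm_num
  have hα2 : α₀ ≠ -1 := by
    intro h; apply h2; rw [← hα, h]; norm_num
  set a : ℤ := α₀.num with hadef
  set b : ℤ := (α₀.den : ℤ) with hbdef
  have hb0 : 0 < b := by rw [hbdef]; exact_mod_cast α₀.pos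
  have ha0 : a ≠ 0 := Rat.num_ne_zero.mpr hα0
  have hco : IsCoprime a b := by
    rw [Int.isCoprime_iff_gcd_eq_one]
    exact α₀.reduced
  have hab : α₀ * (b : ℚ) = (a : ℚ) := Rat.mul_den_eq_num α₀
  have hne : a ^ 2 ≠ b ^ 2 := by
    intro h
    have h' : (a - b) * (a + b) = 0 := by linear_combination h
    rcases mul_eq_zero.mp h' with h' | h'
    · apply hα1
      have hab' : a = b := by linarith
      have : α₀ * (b:ℚ) = 1 * (b:ℚ) := by
        rw [hab, hab']; ring
      exact mul_right_cancel₀ (by exact_mod_cast hb0.ne') this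
    · apply hα2
      have hab' : a = -b := by linarith
      have : α₀ * (b:ℚ) = (-1) * (b:ℚ) := by
        rw [hab, hab']; push_cast; ring
      exact mul_right_cancel₀ (by exact_mod_cast hb0.ne') this
  -- the key rational identity
  set Q : ℚ := q * (b : ℚ) ^ 2 with hQdef
  have hKQ : Q ^ 2 = ((4 * (a ^ 4 - a ^ 2 * b ^ 2 + b ^ 4) : ℤ) : ℚ) := by
    push_cast
    rw [hQdef]
    calc (q * (b:ℚ)^2) ^ 2 = q ^ 2 * ((b:ℚ)^2)^2 := by ring
      _ = (4 * (α₀ ^ 2 + (α₀ ^ 2 - 1) ^ 2)) * ((b:ℚ)^2)^2 := by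
          rw [hq]
      _ = 4 * ((α₀ * b) ^ 4 - (α₀ * b) ^ 2 * (b:ℚ) ^ 2 + ((b:ℚ) ^ 2) ^ 2) := by ring
      _ = 4 * ((a:ℚ) ^ 4 - (a:ℚ) ^ 2 * (b:ℚ) ^ 2 + (b:ℚ) ^ 4) := by rw [hab]; ring
  -- Q is an integer
  have hQden : Q.den = 1 := by
    have hden : (Q * Q).den = Q.den * Q.den := Rat.mul_self_den Q
    have hQQ : Q * Q = ((4 * (a ^ 4 - a ^ 2 * b ^ 2 + b ^ 4) : ℤ) : ℚ) := by
      rw [← hKQ]; ring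
    rw [hQQ, Rat.den_intCast] at hden
    exact Nat.dvd_one.mp ⟨Q.den, hden⟩
  obtain ⟨e, he⟩ : ∃ e : ℤ, (e : ℚ) = Q := ⟨Q.num, (Rat.den_eq_one_iff Q).mp hQden⟩
  have hint : e ^ 2 = 4 * (a ^ 4 - a ^ 2 * b ^ 2 + b ^ 4) := by
    have : ((e ^ 2 : ℤ) : ℚ) = ((4 * (a ^ 4 - a ^ 2 * b ^ 2 + b ^ 4) : ℤ) : ℚ) := by
      push_cast
      rw [he]
      rw [hKQ]; push_cast; ring
    exact_mod_cast this
  -- e is even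
  have heven : Even e := by
    have h2 : Even (e ^ 2) := by
      rw [hint]
      exact ⟨2 * (a ^ 4 - a ^ 2 * b ^ 2 + b ^ 4), by ring⟩
    exact ((Int.even_pow).mp h2).1
  obtain ⟨f, hf⟩ := heven
  have hfsq : f ^ 2 = a ^ 4 - a ^ 2 * b ^ 2 + b ^ 4 := by
    have h' : (f + f) ^ 2 = 4 * (a ^ 4 - a ^ 2 * b ^ 2 + b ^ 4) := by rw [← hf]; exact hint
    have h4 : 4 * f ^ 2 = 4 * (a ^ 4 - a ^ 2 * b ^ 2 + b ^ 4) := by linear_combination h'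
    linarith
  exact quartic_no_sq a b f hco ha0 hb0.ne' hne hfsq
end
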